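/- There is a constant c > 0 such that for the Walsh-Paley Dirichlet kernels, with q_n = ∑_{l=0}^{n} 4^l, one has ∫_G |D_{q_n}(x)| dμ(x) ≥ c·n for all n ≥ 1. In particular the Lebesgue constants ‖D_{q_n}‖_{L^1} are unbounded and grow at least logarithmically in q_n. -/

import Mathlib

open MeasureTheory ENNReal Filter
open scoped Classical

noncomputable section

instance : TopologicalSpace (ZMod 2) := ⊥
instance : DiscreteTopology (ZMod 2) := ⟨rfl⟩
instance : MeasurableSpace (ZMod 2) := ⊤
instance : BorelSpace (ZMod 2) := ⟨borel_eq_top_of_discrete.symm⟩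
instance : IsTopologicalAddGroup (ZMod 2) where
  continuous_add := continuous_of_discreteTopology
  continuous_neg := continuous_of_discreteTopology

/-- The dyadic group `G = (ℤ/2)^ℕ`. -/
abbrev G2 : Type := ℕ → ZMod 2

/-- Normalized Haar (probability) measure on `G2`. -/
def muG : Measure G2 :=
  Measure.addHaarMeasure ⟨⟨Set.univ, isCompact_univ⟩, by
    rw [interior_univ]; exact Set.univ_nonempty⟩

/-- Rademacher functions. -/
def rad (k : ℕ) (x : G2) : ℝ := (-1 : ℝ) ^ ((x k).val)

/-- Walsh–Paley functions. -/
def walsh (n : ℕ) (x : G2) : ℝ :=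
  ∏ k ∈ Finset.range n, if n.testBit k then rad k x else 1

/-- Walsh–Dirichlet kernels. -/
def dirichlet (n : ℕ) (x : G2) : ℝ := ∑ k ∈ Finset.range n, walsh k x

/-- The cylinder sets `I_n`. -/
def cyl (n : ℕ) : Set G2 := {x | ∀ i < n, x i = 0}

/-- Walsh–Fourier coefficients. -/
def fhat (f : G2 → ℝ) (k : ℕ) : ℝ := ∫ x, f x * walsh k x ∂muG

/-- Walsh–Fourier partial sums of a function. -/
def funS (f : G2 → ℝ) (n : ℕ) (x : G2) : ℝ :=
  ∑ k ∈ Finset.range n, fhat f k * walsh k x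

/-- Partial sums of the Walsh series of a dyadic martingale given by coefficients `c`. -/
def mS (c : ℕ → ℝ) (n : ℕ) (x : G2) : ℝ := ∑ k ∈ Finset.range n, c k * walsh k x

/-- The martingale maximal function. -/
def mMax (c : ℕ → ℝ) (x : G2) : ℝ≥0∞ := ⨆ n : ℕ, (‖mS c (2 ^ n) x‖₊ : ℝ≥0∞)

/-- The martingale Hardy space quasi-norm `H_p`. -/
def mHp (p : ℝ) (c : ℕ → ℝ) : ℝ≥0∞ := (∫⁻ x, (mMax c x) ^ p ∂muG) ^ (1 / p)

/-- The maximal function of an integrable function. -/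
def funMax (f : G2 → ℝ) (x : G2) : ℝ≥0∞ := ⨆ n : ℕ, (‖funS f (2 ^ n) x‖₊ : ℝ≥0∞)

/-- The Hardy space quasi-norm of an integrable function. -/
def funHp (p : ℝ) (f : G2 → ℝ) : ℝ≥0∞ := (∫⁻ x, (funMax f x) ^ p ∂muG) ^ (1 / p)

/-- Weak `L^p` quasi-norm. -/
def weakLp (p : ℝ) (f : G2 → ℝ) : ℝ≥0∞ :=
  ⨆ t : NNReal, (t : ℝ≥0∞) * (muG {x | (t : ℝ) < |f x|}) ^ (1 / p)


/-- `q_n = 1 + 4 + ... + 4^n`. -/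
def qq (n : ℕ) : ℕ := ∑ l ∈ Finset.range (n + 1), 4 ^ l

-- ### auxiliary lemmas

lemma zmod2_cases (a : ZMod 2) : a = 0 ∨ a = 1 := by revert a; decide

lemma rad_zero {k : ℕ} {x : G2} (h : x k = 0) : rad k x = 1 := by
  unfold rad; rw [h]; norm_num

lemma rad_one {k : ℕ} {x : G2} (h : x k = 1) : rad k x = -1 := by
  have h1 : (1 : ZMod 2).val = 1 := rfl
  unfold rad; rw [h, h1]; norm_num

lemma abs_rad (k : ℕ) (x : G2) : |rad k x| = 1 := by
  unfold rad; rw [abs_pow, abs_neg, abs_one, one_pow]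

lemma continuous_rad (k : ℕ) : Continuous (rad k) :=
  (continuous_of_discreteTopology (f := fun a : ZMod 2 => ((-1 : ℝ)) ^ a.val)).comp
    (continuous_apply k)

lemma walsh_eq_prod {n N : ℕ} (hn : n < 2 ^ N) (x : G2) :
    walsh n x = ∏ i ∈ Finset.range N, (if n.testBit i then rad i x else 1) := by
  have key : ∀ M M' : ℕ, M ≤ M' → n < 2 ^ M →
      (∏ i ∈ Finset.range M, (if n.testBit i then rad i x else 1) : ℝ) =
      (∏ i ∈ Finset.range M', (if n.testBit i then rad i x else 1) : ℝ) := by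
    intro M M' hMM' hnM
    apply Finset.prod_subset (Finset.range_subset_range.2 hMM')
    intro i _ hi
    rw [Finset.mem_range, not_lt] at hi
    have : n < 2 ^ i := lt_of_lt_of_le hnM (Nat.pow_le_pow_right (by norm_num) hi)
    rw [Nat.testBit_lt_two_pow this]; simp
  have h1 := key n (max n N) (le_max_left _ _) (Nat.lt_two_pow_self (n := n))
  have h2 := key N (max n N) (le_max_right _ _) hn
  rw [walsh, h1, h2]

lemma walsh_two_pow (k : ℕ) (x : G2) : walsh (2 ^ k) x = rad k x := by
  rw [walsh_eq_prod (N := k + 1) (Nat.pow_lt_pow_right one_lt_two k.lt_succ_self) x,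
    Finset.prod_range_succ]
  have h1 : ∀ i ∈ Finset.range k, (if (2 ^ k).testBit i then rad i x else 1) = 1 := by
    intro i hi
    rw [Finset.mem_range] at hi
    rw [Nat.testBit_two_pow]
    simp [Nat.ne_of_gt hi]
  rw [Finset.prod_congr rfl h1, Finset.prod_const_one, one_mul,
    Nat.testBit_two_pow]
  simp

lemma walsh_two_pow_add {k j : ℕ} (hj : j < 2 ^ k) (x : G2) :
    walsh (2 ^ k + j) x = rad k x * walsh j x := by
  have hlt : 2 ^ k + j < 2 ^ (k + 1) := by
    rw [pow_succ]; omega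
  rw [walsh_eq_prod (N := k + 1) hlt x,
    walsh_eq_prod (N := k + 1) (lt_trans hj (by rw [pow_succ]; omega)) x,
    Finset.prod_range_succ, Finset.prod_range_succ]
  have hjk : j.testBit k = false := Nat.testBit_lt_two_pow hj
  have h1 : (2 ^ k + j).testBit k = true := by
    rw [Nat.testBit_two_pow_add_eq, hjk]; rfl
  have h2 : ∀ i ∈ Finset.range k, (if (2 ^ k + j).testBit i then rad i x else 1) =
      (if j.testBit i then rad i x else 1) := by
    intro i hi
    rw [Finset.mem_range] at hi
    rw [Nat.testBit_two_pow_add_gt hi]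
  rw [Finset.prod_congr rfl h2, h1, hjk]
  simp [mul_comm]

lemma abs_walsh (n : ℕ) (x : G2) : |walsh n x| = 1 := by
  rw [walsh, Finset.abs_prod]
  refine Finset.prod_eq_one fun i _ => ?_
  split <;> simp [abs_rad]

lemma abs_dirichlet_le (n : ℕ) (x : G2) : |dirichlet n x| ≤ n := by
  calc |dirichlet n x| ≤ ∑ k ∈ Finset.range n, |walsh k x| :=
        Finset.abs_sum_le_sum_abs _ _
    _ = n := by simp [abs_walsh]

lemma dirichlet_two_pow (k : ℕ) (x : G2) :
    dirichlet (2 ^ k) x = if x ∈ cyl k then (2 ^ k : ℝ) else 0 := by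
  induction k with
  | zero =>
    simp only [pow_zero, dirichlet, Finset.sum_range_one, walsh, Finset.range_zero,
      Finset.prod_empty]
    have : x ∈ cyl 0 := by intro i hi; omega
    simp [this]
  | succ k ih =>
    have hsplit : dirichlet (2 ^ (k + 1)) x
        = dirichlet (2 ^ k) x + rad k x * dirichlet (2 ^ k) x := by
      rw [dirichlet, dirichlet, pow_succ, mul_two, Finset.sum_range_add, Finset.mul_sum]
      congr 1
      exact Finset.sum_congr rfl fun i hi =>
        walsh_two_pow_add (Finset.mem_range.1 hi) x
    rw [hsplit, ih]
    by_cases hk : x ∈ cyl k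
    · by_cases hz : x k = 0
      · have : x ∈ cyl (k + 1) := by
          intro i hi
          rcases Nat.lt_succ_iff_lt_or_eq.1 hi with h | h
          · exact hk i h
          · rw [h]; exact hz
        rw [rad_zero hz]
        simp [this, hk]
        ring
      · have hone : x k = 1 := (zmod2_cases (x k)).resolve_left hz
        have : x ∉ cyl (k + 1) := fun h => hz (h k k.lt_succ_self)
        rw [rad_one hone]
        simp [this, hk]
    · have : x ∉ cyl (k + 1) := fun h => hk (fun i hi => h i (Nat.lt_succ_of_lt hi))
      simp [this, hk]

lemma dirichlet_two_pow_add {k m : ℕ} (hm : m ≤ 2 ^ k) (x : G2) :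
    dirichlet (2 ^ k + m) x = dirichlet (2 ^ k) x + rad k x * dirichlet m x := by
  rw [dirichlet, dirichlet, dirichlet, Finset.sum_range_add, Finset.mul_sum]
  congr 1
  exact Finset.sum_congr rfl fun i hi =>
    walsh_two_pow_add (lt_of_lt_of_le (Finset.mem_range.1 hi) hm) x

-- qq arithmetic
lemma qq_succ (n : ℕ) : qq (n + 1) = 4 ^ (n + 1) + qq n := by
  rw [qq, Finset.sum_range_succ, add_comm]; rfl

lemma three_qq (n : ℕ) : 3 * qq n + 1 = 4 ^ (n + 1) := by
  induction n with
  | zero => rfl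
  | succ n ih => rw [qq_succ]; ring_nf; ring_nf at ih; omega

lemma four_pow (l : ℕ) : (4 : ℕ) ^ l = 2 ^ (2 * l) := by
  rw [pow_mul]; norm_num

lemma qq_le (n : ℕ) : qq n ≤ 2 ^ (2 * (n + 1)) := by
  rw [← four_pow]; have := three_qq n; omega

lemma dirichlet_qq_succ (n : ℕ) (x : G2) :
    dirichlet (qq (n + 1)) x
      = dirichlet (2 ^ (2 * (n + 1))) x + rad (2 * (n + 1)) x * dirichlet (qq n) x := by
  rw [qq_succ, four_pow]
  exact dirichlet_two_pow_add (qq_le n) x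

-- ### pointwise lower bound

def Bset (n : ℕ) : Set G2 := {x | (∀ i < n, x i = 0) ∧ x n = 1}

lemma key_base (l : ℕ) (x : G2) (hx : ∀ i < 2 * l, x i = 0) :
    (2 / 3 : ℝ) * 4 ^ l ≤ |dirichlet (qq l) x| := by
  cases l with
  | zero =>
    have h1 : dirichlet (qq 0) x = 1 := by
      simp [qq, dirichlet, walsh]
    rw [h1]; norm_num
  | succ m =>
    rw [dirichlet_qq_succ m x, dirichlet_two_pow]
    have hmem : x ∈ cyl (2 * (m + 1)) := hx
    rw [if_pos hmem]
    set A : ℝ := (2 : ℝ) ^ (2 * (m + 1)) with hA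
    set r : ℝ := rad (2 * (m + 1)) x * dirichlet (qq m) x with hr
    have h1 : |r| ≤ (qq m : ℝ) := by
      rw [hr, abs_mul, abs_rad, one_mul]; exact abs_dirichlet_le _ x
    have h2 : (3 : ℝ) * (qq m : ℝ) + 1 = A := by
      have h3 := three_qq m
      have h4 : ((3 * qq m + 1 : ℕ) : ℝ) = ((4 ^ (m + 1) : ℕ) : ℝ) := by rw [h3]
      push_cast at h4
      rw [hA]
      rw [h4]
      norm_num [pow_mul]
    have h5 : A ≤ |A + r| + |r| := by
      have h6 : A = |A| := by
        rw [abs_of_nonneg]; positivity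
      calc A = |(A + r) + (-r)| := by
            have h8 : (A + r) + (-r) = A := by ring
            rw [h8, ← h6]
        _ ≤ |A + r| + |(-r)| := abs_add_le _ _
        _ = |A + r| + |r| := by rw [abs_neg]
    have h7 : (4 : ℝ) ^ (m + 1) = A := by rw [hA]; norm_num [pow_mul]
    rw [h7]
    linarith

lemma key (l n : ℕ) (hln : l ≤ n) (x : G2) (hx : ∀ i < 2 * l, x i = 0)
    (hx1 : x (2 * l) = 1) :
    (2 / 3 : ℝ) * 4 ^ l ≤ |dirichlet (qq n) x| := by
  induction n, hln using Nat.le_induction with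
  | base => exact key_base l x hx
  | succ n hln ih =>
    rw [dirichlet_qq_succ n x, dirichlet_two_pow]
    have hnot : x ∉ cyl (2 * (n + 1)) := by
      intro h
      have h0 := h (2 * l) (by omega)
      rw [hx1] at h0
      exact absurd h0 (by revert h0; decide)
    rw [if_neg hnot, zero_add, abs_mul, abs_rad, one_mul]
    exact ih

-- ### measure theory

instance : Measure.IsAddLeftInvariant muG := by unfold muG; infer_instance

instance : IsProbabilityMeasure muG :=
  ⟨Measure.addHaarMeasure_self (K₀ := ⟨⟨Set.univ, isCompact_univ⟩, by
    rw [interior_univ]; exact Set.univ_nonempty⟩)⟩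

lemma measurableSet_cyl (n : ℕ) : MeasurableSet (cyl n) := by
  have h : cyl n = ⋂ i ∈ Set.Iio n, (fun x : G2 => x i) ⁻¹' {0} := by
    ext x; simp [cyl]
  rw [h]
  exact MeasurableSet.biInter (Set.to_countable _) fun i _ =>
    measurable_pi_apply i (by trivial)

lemma measurableSet_Bset (n : ℕ) : MeasurableSet (Bset n) := by
  have h : Bset n = cyl n ∩ (fun x : G2 => x n) ⁻¹' {1} := by
    ext x; simp [Bset, cyl]
  rw [h]
  exact (measurableSet_cyl n).inter (measurable_pi_apply n (by trivial))

def eG (n : ℕ) : G2 := fun i => if i = n then 1 else 0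

lemma preimage_eG (n : ℕ) : (fun x => eG n + x) ⁻¹' cyl (n + 1) = Bset n := by
  ext x
  simp only [Set.mem_preimage, cyl, Set.mem_setOf_eq, Bset, Pi.add_apply]
  constructor
  · intro h
    refine ⟨fun i hi => ?_, ?_⟩
    · have h2 := h i (by omega)
      rwa [eG, if_neg (by omega), zero_add] at h2
    · have h2 := h n (by omega)
      rw [eG, if_pos rfl] at h2
      rcases zmod2_cases (x n) with h0 | h1
      · rw [h0] at h2; exact absurd h2 (by decide)
      · exact h1
  · rintro ⟨h0, h1⟩ i hi
    rcases (by omega : i < n ∨ i = n) with h | rfl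
    · rw [eG, if_neg (by omega), zero_add]; exact h0 i h
    · rw [eG, if_pos rfl, h1]; decide

lemma muG_Bset (n : ℕ) : muG (Bset n) = muG (cyl (n + 1)) := by
  rw [← preimage_eG n, measure_preimage_add]

lemma cyl_decomp (n : ℕ) : cyl n = cyl (n + 1) ∪ Bset n := by
  ext x
  simp only [Set.mem_union, cyl, Set.mem_setOf_eq, Bset]
  constructor
  · intro h
    rcases zmod2_cases (x n) with h0 | h1
    · left
      intro i hi
      rcases (by omega : i < n ∨ i = n) with h' | rfl
      · exact h i h'
      · exact h0
    · right; exact ⟨h, h1⟩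
  · rintro (h | ⟨h, _⟩) i hi
    · exact h i (by omega)
    · exact h i hi

lemma muG_cyl (n : ℕ) : muG (cyl n) = 2⁻¹ ^ n := by
  induction n with
  | zero =>
    have h : cyl 0 = Set.univ := by
      ext x; simp [cyl]
    rw [h, pow_zero]
    exact measure_univ
  | succ n ih =>
    have hd : Disjoint (cyl (n + 1)) (Bset n) := by
      rw [Set.disjoint_left]
      intro x hx hx'
      have h1 := hx n n.lt_succ_self
      rw [hx'.2] at h1
      exact absurd h1 (by decide)
    have h2 : muG (cyl n) = muG (cyl (n + 1)) + muG (cyl (n + 1)) := by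
      rw [cyl_decomp n, measure_union hd (measurableSet_Bset n), muG_Bset]
    have h3 : (2 : ℝ≥0∞) * muG (cyl (n + 1)) = 2⁻¹ ^ n := by
      rw [two_mul, ← h2, ih]
    have h4 : muG (cyl (n + 1)) = 2⁻¹ ^ n / 2 :=
      (ENNReal.eq_div_iff (by norm_num) (by norm_num)).2 h3
    rw [h4, pow_succ, div_eq_mul_inv]

lemma muG_Bset' (n : ℕ) : muG (Bset n) = 2⁻¹ ^ (n + 1) := by
  rw [muG_Bset, muG_cyl]

-- ### continuity / integrability

lemma continuous_walsh (n : ℕ) : Continuous (walsh n) := by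
  unfold walsh
  apply continuous_finset_prod
  intro i _
  by_cases h : n.testBit i
  · simpa [h] using continuous_rad i
  · simp [h]; exact continuous_const

lemma continuous_dirichlet (n : ℕ) : Continuous (dirichlet n) := by
  unfold dirichlet
  exact continuous_finset_sum _ fun i _ => continuous_walsh i


theorem stmt4 :
    ∃ c : ℝ, 0 < c ∧ ∀ n : ℕ, 1 ≤ n → c * n ≤ ∫ x, |dirichlet (qq n) x| ∂muG := by
  refine ⟨1 / 3, by norm_num, fun n hn => ?_⟩
  set f : G2 → ℝ := fun x => |dirichlet (qq n) x| with hf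
  have hcont : Continuous f := (continuous_dirichlet (qq n)).abs
  have hint : Integrable f muG :=
    hcont.integrable_of_hasCompactSupport (HasCompactSupport.of_compactSpace f)
  have hmeas : ∀ l ∈ Finset.range n, MeasurableSet (Bset (2 * l)) :=
    fun l _ => measurableSet_Bset (2 * l)
  have hdisj : (Finset.range n : Set ℕ).PairwiseDisjoint (fun l => Bset (2 * l)) := by
    intro a _ b _ hab
    show Disjoint (Bset (2 * a)) (Bset (2 * b))
    rcases Nat.lt_or_ge a b with h | h
    · rw [Set.disjoint_left]
      intro x hxa hxb
      have h1 : x (2 * a) = 1 := hxa.2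
      have h2 : x (2 * a) = 0 := hxb.1 (2 * a) (by omega)
      rw [h1] at h2
      exact absurd h2 (by decide)
    · have hba : b < a := by omega
      rw [Set.disjoint_right]
      intro x hxa hxb
      have h1 : x (2 * b) = 1 := hxa.2
      have h2 : x (2 * b) = 0 := hxb.1 (2 * b) (by omega)
      rw [h1] at h2
      exact absurd h2 (by decide)
  have hsum : ∫ x in (⋃ l ∈ Finset.range n, Bset (2 * l)), f x ∂muG
      = ∑ l ∈ Finset.range n, ∫ x in Bset (2 * l), f x ∂muG :=
    integral_biUnion_finset _ hmeas hdisj (fun l _ => hint.integrableOn)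
  have hle1 : ∫ x in (⋃ l ∈ Finset.range n, Bset (2 * l)), f x ∂muG
      ≤ ∫ x, f x ∂muG :=
    setIntegral_le_integral hint (Filter.Eventually.of_forall fun x => abs_nonneg _)
  have hpiece : ∀ l ∈ Finset.range n, (1 / 3 : ℝ) ≤ ∫ x in Bset (2 * l), f x ∂muG := by
    intro l hl
    have hlt : l < n := Finset.mem_range.1 hl
    have hconst : ∀ x ∈ Bset (2 * l), (2 / 3 : ℝ) * 4 ^ l ≤ f x := fun x hx =>
      key l n hlt.le x hx.1 hx.2
    have hge := setIntegral_ge_of_const_le_real (measurableSet_Bset (2 * l))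
      (measure_ne_top muG _) hconst hint.integrableOn
    have hval : (muG (Bset (2 * l))).toReal = (2 : ℝ)⁻¹ ^ (2 * l + 1) := by
      rw [muG_Bset' (2 * l), ENNReal.toReal_pow, ENNReal.toReal_inv]
      norm_num
    rw [measureReal_def, hval] at hge
    refine le_trans (le_of_eq ?_) hge
    have h4 : (2 : ℝ)⁻¹ ^ (2 * l + 1) = (4 : ℝ)⁻¹ ^ l * 2⁻¹ := by
      rw [pow_succ, pow_mul]
      norm_num
    rw [h4]
    have h5 : (4 : ℝ)⁻¹ ^ l * (4 : ℝ) ^ l = 1 := by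
      rw [← mul_pow]
      norm_num
    calc (1 / 3 : ℝ) = 2 / 3 * ((4 : ℝ)⁻¹ ^ l * 4 ^ l) * 2⁻¹ := by rw [h5]; norm_num
      _ = 2 / 3 * 4 ^ l * ((4 : ℝ)⁻¹ ^ l * 2⁻¹) := by ring
  calc (1 / 3 : ℝ) * n = ∑ _l ∈ Finset.range n, (1 / 3 : ℝ) := by
        rw [Finset.sum_const, Finset.card_range, nsmul_eq_mul, mul_comm]
    _ ≤ ∑ l ∈ Finset.range n, ∫ x in Bset (2 * l), f x ∂muG :=
        Finset.sum_le_sum hpiece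
    _ = ∫ x in (⋃ l ∈ Finset.range n, Bset (2 * l)), f x ∂muG := hsum.symm
    _ ≤ ∫ x, f x ∂muG := hle1

end
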